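/- arXiv:1205.3521 — 3 statements merged into one kernel-verified Lean document; each statement's English description precedes it below -/
import Mathlib

section
/- Let σ ∈ [0,1), β ∈ ℝ, U > 0 with -U < β, and M > 0. Suppose H : ℝ → ℝ is continuous on the closed interval [-U, β] and satisfies the H1-estimate: |H(u) - H(û)| ≤ (M / ((β - u)^σ + (β - û)^σ)) · |u - û| for all u, û ∈ [-U, β). Then H is Hölder continuous with exponent 1 - σ and constant M on [-U, β]: |H(u) - H(û)| ≤ M · |u - û|^{1-σ} for all u, û ∈ [-U, β]. -/
open Topology Filter


/-- A function satisfying the H1-estimate near the upper threshold β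
is Hölder continuous with exponent 1 - σ and constant M on [-U, β]. -/
theorem holder_of_H1_estimate
    (σ β U M : ℝ) (hσ0 : 0 ≤ σ) (hσ1 : σ < 1)
    (hU : 0 < U) (hUβ : -U < β) (hM : 0 < M)
    (H : ℝ → ℝ)
    (hcont : ContinuousOn H (Set.Icc (-U) β))
    (hest : ∀ u ∈ Set.Ico (-U) β, ∀ u' ∈ Set.Ico (-U) β,
      |H u - H u'| ≤ (M / ((β - u) ^ σ + (β - u') ^ σ)) * |u - u'|) :
    ∀ u ∈ Set.Icc (-U) β, ∀ u' ∈ Set.Icc (-U) β,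
      |H u - H u'| ≤ M * |u - u'| ^ (1 - σ) := by
  have h1σ : (0:ℝ) < 1 - σ := by linarith
  have core : ∀ u ∈ Set.Ico (-U) β, ∀ u' ∈ Set.Ico (-U) β,
      |H u - H u'| ≤ M * |u - u'| ^ (1 - σ) := by
    have key : ∀ u ∈ Set.Ico (-U) β, ∀ u' ∈ Set.Ico (-U) β, u < u' →
        |H u - H u'| ≤ M * |u - u'| ^ (1 - σ) := by
      intro u hu u' hu' hlt
      have hd : (0:ℝ) < u' - u := by linarith
      have habs : |u - u'| = u' - u := by
        rw [abs_sub_comm]; exact abs_of_pos hd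
      have h1 : (u' - u) ^ σ ≤ (β - u) ^ σ :=
        Real.rpow_le_rpow (le_of_lt hd) (by linarith [hu'.2]) hσ0
      have h2 : (0:ℝ) ≤ (β - u') ^ σ := Real.rpow_nonneg (by linarith [hu'.2]) σ
      have hdpos : (0:ℝ) < (u' - u) ^ σ := Real.rpow_pos_of_pos hd σ
      have hdiv : M / ((β - u) ^ σ + (β - u') ^ σ) ≤ M / (u' - u) ^ σ :=
        div_le_div_of_nonneg_left (le_of_lt hM) hdpos (by linarith)
      calc |H u - H u'| ≤ (M / ((β - u) ^ σ + (β - u') ^ σ)) * |u - u'| :=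
            hest u hu u' hu'
        _ ≤ (M / (u' - u) ^ σ) * |u - u'| :=
            mul_le_mul_of_nonneg_right hdiv (abs_nonneg _)
        _ = M * (u' - u) ^ (1 - σ) := by
            rw [habs, Real.rpow_sub hd, Real.rpow_one]
            field_simp
        _ = M * |u - u'| ^ (1 - σ) := by rw [habs]
    intro u hu u' hu'
    rcases lt_trichotomy u u' with h | h | h
    · exact key u hu u' hu' h
    · subst h
      simp [Real.zero_rpow (by linarith : (1:ℝ) - σ ≠ 0)]
    · have := key u' hu' u hu h
      rwa [abs_sub_comm (H u'), abs_sub_comm u'] at this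
  have hext : ∀ u ∈ Set.Ico (-U) β, |H u - H β| ≤ M * |u - β| ^ (1 - σ) := by
    intro u hu
    haveI hne : (𝓝[Set.Ioo (-U) β] β).NeBot := right_nhdsWithin_Ioo_neBot hUβ
    have hHβ : Filter.Tendsto H (𝓝[Set.Ioo (-U) β] β) (𝓝 (H β)) :=
      (hcont β (Set.right_mem_Icc.2 (le_of_lt hUβ))).mono_left
        (nhdsWithin_mono β Set.Ioo_subset_Icc_self)
    have hT1 : Filter.Tendsto (fun t => |H u - H t|) (𝓝[Set.Ioo (-U) β] β)
        (𝓝 |H u - H β|) := (Filter.Tendsto.sub tendsto_const_nhds hHβ).abs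
    have hbase : Filter.Tendsto (fun t : ℝ => |u - t|) (𝓝[Set.Ioo (-U) β] β)
        (𝓝 |u - β|) :=
      ((Filter.Tendsto.sub tendsto_const_nhds Filter.tendsto_id).abs).mono_left
        nhdsWithin_le_nhds
    have hT2 : Filter.Tendsto (fun t : ℝ => M * |u - t| ^ (1 - σ))
        (𝓝[Set.Ioo (-U) β] β) (𝓝 (M * |u - β| ^ (1 - σ))) :=
      Filter.Tendsto.const_mul M
        (((Real.continuousAt_rpow_const _ _ (Or.inr h1σ.le)).tendsto).comp hbase)
    refine le_of_tendsto_of_tendsto hT1 hT2 ?_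
    filter_upwards [self_mem_nhdsWithin] with t ht
    exact core u hu t ⟨le_of_lt ht.1, ht.2⟩
  intro u hu u' hu'
  rcases lt_or_eq_of_le hu.2 with huβ | huβ
  · rcases lt_or_eq_of_le hu'.2 with hu'β | hu'β
    · exact core u ⟨hu.1, huβ⟩ u' ⟨hu'.1, hu'β⟩
    · subst hu'β
      exact hext u ⟨hu.1, huβ⟩
  · subst huβ
    rcases lt_or_eq_of_le hu'.2 with hu'β | hu'β
    · have := hext u' ⟨hu'.1, hu'β⟩
      rwa [abs_sub_comm (H u'), abs_sub_comm u'] at this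
    · subst hu'β
      simp [Real.zero_rpow (by linarith : (1:ℝ) - σ ≠ 0)]
end

section
/- Let σ ∈ [0,1), β ∈ ℝ, U > 0 with -U < β, and M > 0. Suppose H : ℝ → ℝ is continuous on [-U, β] and satisfies |H(u) - H(û)| ≤ (M / ((β - u)^σ + (β - û)^σ)) · |u - û| for all u, û ∈ [-U, β), and let f : ℝ × ℝ → ℝ be locally Lipschitz continuous. Then the composed function F(u) = f(u, H(u)) satisfies an estimate of the same form: there exists M' > 0 such that |F(u) - F(û)| ≤ (M' / ((β - u)^σ + (β - û)^σ)) · |u - û| for all u, û ∈ [-U, β). -/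
/-- A locally Lipschitz real-valued function on a metric space is Lipschitz
(with some constant) on any nonempty compact set. -/
lemma locallyLipschitz_lipschitz_on_compact {α : Type*} [MetricSpace α]
    {f : α → ℝ} (hf : LocallyLipschitz f) {K : Set α} (hK : IsCompact K)
    (hne : K.Nonempty) :
    ∃ C : ℝ, 0 < C ∧ ∀ p ∈ K, ∀ q ∈ K, |f p - f q| ≤ C * dist p q := by
  have hfc : Continuous f := hf.continuous
  choose c t ht hl using hf
  choose r hr hball using fun x => Metric.mem_nhds_iff.mp (ht x)
  obtain ⟨s, hsK, hcover⟩ := hK.elim_nhds_subcover (fun x => Metric.ball x (r x / 2))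
    (fun x _ => Metric.ball_mem_nhds x (by have := hr x; linarith))
  have hsne : s.Nonempty := by
    obtain ⟨p0, hp0⟩ := hne
    have := hcover hp0
    simp only [Set.mem_iUnion] at this
    obtain ⟨i, hi, _⟩ := this
    exact ⟨i, hi⟩
  set δ : ℝ := s.inf' hsne (fun x => r x / 2) with hδdef
  have hδpos : 0 < δ := by
    rw [hδdef, Finset.lt_inf'_iff]
    intro i _
    have := hr i; linarith
  set L : NNReal := s.sup' hsne c with hLdef
  obtain ⟨C0, hC0⟩ := hK.exists_bound_of_continuousOn hfc.continuousOn
  have hC0nn : 0 ≤ C0 := by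
    obtain ⟨p0, hp0⟩ := hne
    exact le_trans (norm_nonneg _) (hC0 p0 hp0)
  refine ⟨(L : ℝ) + (2 * (C0 + 1)) / δ + 1, by positivity, ?_⟩
  intro p hp q hq
  by_cases hd : dist p q < δ
  · -- near case: both points are in some ball where f is Lipschitz
    have := hcover hp
    simp only [Set.mem_iUnion] at this
    obtain ⟨i, hi, hpi⟩ := this
    have hpball : p ∈ Metric.ball i (r i) := by
      simp only [Metric.mem_ball] at hpi ⊢
      have := hr i
      linarith
    have hqball : q ∈ Metric.ball i (r i) := by
      simp only [Metric.mem_ball] at hpi ⊢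
      have hδle : δ ≤ r i / 2 := Finset.inf'_le _ hi
      have := dist_triangle q p i
      rw [dist_comm q p] at this
      linarith
    have hlip := ((hl i).mono (hball i)).dist_le_mul p hpball q hqball
    rw [Real.dist_eq] at hlip
    have hci : (c i : ℝ) ≤ (L : ℝ) := by
      exact_mod_cast Finset.le_sup' c hi
    calc |f p - f q| ≤ (c i : ℝ) * dist p q := hlip
      _ ≤ ((L : ℝ) + (2 * (C0 + 1)) / δ + 1) * dist p q := by
          apply mul_le_mul_of_nonneg_right _ dist_nonneg
          have : 0 ≤ (2 * (C0 + 1)) / δ := by positivity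
          linarith
  · -- far case: use the bound on f
    push_neg at hd
    have h1 : |f p - f q| ≤ 2 * (C0 + 1) := by
      have hp' := hC0 p hp
      have hq' := hC0 q hq
      rw [Real.norm_eq_abs] at hp' hq'
      have := abs_sub_abs_le_abs_sub (f p) (f q)
      have h2 := abs_sub (f p) (f q)
      calc |f p - f q| ≤ |f p| + |f q| := abs_sub _ _
        _ ≤ 2 * (C0 + 1) := by linarith
    calc |f p - f q| ≤ 2 * (C0 + 1) := h1
      _ = (2 * (C0 + 1)) / δ * δ := by field_simp
      _ ≤ (2 * (C0 + 1)) / δ * dist p q := by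
          apply mul_le_mul_of_nonneg_left hd (by positivity)
      _ ≤ ((L : ℝ) + (2 * (C0 + 1)) / δ + 1) * dist p q := by
          apply mul_le_mul_of_nonneg_right _ dist_nonneg
          have : (0 : ℝ) ≤ L := L.coe_nonneg
          linarith

/-- If H satisfies the H1-estimate on [-U, β) and is continuous
on [-U, β], and f : ℝ × ℝ → ℝ is locally Lipschitz, then F(u) = f(u, H(u))
satisfies an estimate of the same form on [-U, β). -/
theorem composition_satisfies_H1_estimate
    (σ β U M : ℝ) (hσ0 : 0 ≤ σ) (hσ1 : σ < 1)
    (hU : 0 < U) (hUβ : -U < β) (hM : 0 < M)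
    (H : ℝ → ℝ)
    (hcont : ContinuousOn H (Set.Icc (-U) β))
    (hest : ∀ u ∈ Set.Ico (-U) β, ∀ u' ∈ Set.Ico (-U) β,
      |H u - H u'| ≤ (M / ((β - u) ^ σ + (β - u') ^ σ)) * |u - u'|)
    (f : ℝ × ℝ → ℝ) (hf : LocallyLipschitz f) :
    ∃ M' : ℝ, 0 < M' ∧
      ∀ u ∈ Set.Ico (-U) β, ∀ u' ∈ Set.Ico (-U) β,
        |f (u, H u) - f (u', H u')| ≤
          (M' / ((β - u) ^ σ + (β - u') ^ σ)) * |u - u'| := by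
  -- the graph of H over [-U, β] is compact
  set g : ℝ → ℝ × ℝ := fun u => (u, H u) with hgdef
  have hgcont : ContinuousOn g (Set.Icc (-U) β) :=
    (continuousOn_id).prodMk hcont
  have hKcomp : IsCompact (g '' Set.Icc (-U) β) :=
    (isCompact_Icc).image_of_continuousOn hgcont
  have hKne : (g '' Set.Icc (-U) β).Nonempty :=
    ⟨g β, Set.mem_image_of_mem g (Set.mem_Icc.mpr ⟨le_of_lt hUβ, le_refl β⟩)⟩
  obtain ⟨C, hCpos, hC⟩ := locallyLipschitz_lipschitz_on_compact hf hKcomp hKne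
  have hβU : 0 < β + U := by linarith
  refine ⟨C * (2 * (β + U) ^ σ + M), by positivity, ?_⟩
  intro u hu u' hu'
  obtain ⟨hu1, hu2⟩ := hu
  obtain ⟨hu1', hu2'⟩ := hu'
  set s : ℝ := (β - u) ^ σ + (β - u') ^ σ with hsdef
  have hs1 : (0:ℝ) < (β - u) ^ σ := Real.rpow_pos_of_pos (by linarith) σ
  have hs2 : (0:ℝ) < (β - u') ^ σ := Real.rpow_pos_of_pos (by linarith) σ
  have hspos : 0 < s := by positivity
  -- s is bounded above by 2 * (β + U)^σ
  have hsle : s ≤ 2 * (β + U) ^ σ := by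
    have h1 : (β - u) ^ σ ≤ (β + U) ^ σ :=
      Real.rpow_le_rpow (by linarith) (by linarith) hσ0
    have h2 : (β - u') ^ σ ≤ (β + U) ^ σ :=
      Real.rpow_le_rpow (by linarith) (by linarith) hσ0
    rw [hsdef]; linarith
  -- apply the compact Lipschitz estimate
  have hpu : g u ∈ g '' Set.Icc (-U) β :=
    Set.mem_image_of_mem g (Set.mem_Icc.mpr ⟨hu1, le_of_lt hu2⟩)
  have hpu' : g u' ∈ g '' Set.Icc (-U) β :=
    Set.mem_image_of_mem g (Set.mem_Icc.mpr ⟨hu1', le_of_lt hu2'⟩)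
  have hlip := hC (g u) hpu (g u') hpu'
  have hdist : dist (g u) (g u') ≤ (1 + M / s) * |u - u'| := by
    rw [hgdef]
    rw [Prod.dist_eq]
    simp only [Real.dist_eq]
    have hH := hest u ⟨hu1, hu2⟩ u' ⟨hu1', hu2'⟩
    rw [← hsdef] at hH
    have hMs : 0 ≤ M / s := by positivity
    have h1 : |u - u'| ≤ (1 + M / s) * |u - u'| := by
      nlinarith [abs_nonneg (u - u')]
    have h2 : |H u - H u'| ≤ (1 + M / s) * |u - u'| := by
      nlinarith [abs_nonneg (u - u')]
    exact max_le h1 h2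
  calc |f (u, H u) - f (u', H u')| ≤ C * dist (g u) (g u') := hlip
    _ ≤ C * ((1 + M / s) * |u - u'|) :=
        mul_le_mul_of_nonneg_left hdist (le_of_lt hCpos)
    _ ≤ (C * (2 * (β + U) ^ σ + M) / s) * |u - u'| := by
        have key : C * ((1 + M / s) * |u - u'|) = (C * (s + M) / s) * |u - u'| := by
          field_simp
        rw [key]
        gcongr
end

section
/- Let g : ℝ → ℝ be continuous, let α < β be real numbers, and for t > 0 define X_t = {t' ∈ (0, t] : g(t') = α or g(t') = β}. Let t₀ > 0 and suppose X_{t₀} is nonempty with greatest element m₀. Then there exists δ > 0 such that for every t ∈ [t₀, t₀ + δ], the set X_t is nonempty, has a greatest element m_t, and g(m_t) = g(m₀). -/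
/-- Auxiliary: if near `t₀` every crossing value equals `c`, and `g t₀ = c`,
we can find a greatest crossing point with value `c`. -/
lemma crossing_aux (g : ℝ → ℝ) (hg : Continuous g) (c : ℝ)
    (t₀ t : ℝ) (ht₀ : 0 < t₀) (ht : t₀ ≤ t) (hgt₀ : g t₀ = c) :
    ∃ m : ℝ, IsGreatest {s : ℝ | s ∈ Set.Icc t₀ t ∧ g s = c} m := by
  have hcomp : IsCompact {s : ℝ | s ∈ Set.Icc t₀ t ∧ g s = c} := by
    apply (isCompact_Icc (a := t₀) (b := t)).inter_right
    exact isClosed_eq hg continuous_const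
  exact hcomp.exists_isGreatest ⟨t₀, ⟨le_refl _, ht⟩, hgt₀⟩

/-- right-continuity (at positive times) of the value of g at the
last threshold-crossing time. -/
theorem crossing_value_locally_constant_from_right
    (g : ℝ → ℝ) (hg : Continuous g) (α β : ℝ) (hαβ : α < β)
    (X : ℝ → Set ℝ)
    (hX : ∀ t : ℝ, X t = {t' : ℝ | t' ∈ Set.Ioc 0 t ∧ (g t' = α ∨ g t' = β)})
    (t₀ : ℝ) (ht₀ : 0 < t₀)
    (m₀ : ℝ) (hm₀ : IsGreatest (X t₀) m₀) :
    ∃ δ : ℝ, 0 < δ ∧ ∀ t ∈ Set.Icc t₀ (t₀ + δ),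
      ∃ m : ℝ, IsGreatest (X t) m ∧ g m = g m₀ := by
  have hm₀mem := hm₀.1
  rw [hX] at hm₀mem
  obtain ⟨⟨hm₀pos, hm₀le⟩, hgm₀⟩ := hm₀mem
  by_cases hgt : g t₀ = α ∨ g t₀ = β
  · -- then m₀ = t₀
    have ht₀X : t₀ ∈ X t₀ := by rw [hX]; exact ⟨⟨ht₀, le_refl _⟩, hgt⟩
    have hm₀t₀ : m₀ = t₀ := le_antisymm hm₀le (hm₀.2 ht₀X)
    rcases hgt with hc | hc
    · -- g t₀ = α; nearby g < β
      have hev : ∀ᶠ s in nhds t₀, g s < β := by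
        have : g t₀ < β := by rw [hc]; exact hαβ
        exact hg.continuousAt.eventually_lt continuousAt_const this
      rw [Metric.eventually_nhds_iff] at hev
      obtain ⟨ε, hε, hεP⟩ := hev
      refine ⟨ε / 2, by positivity, ?_⟩
      intro t ⟨ht1, ht2⟩
      obtain ⟨m, hmmem, hmub⟩ := crossing_aux g hg α t₀ t ht₀ ht1 hc
      refine ⟨m, ⟨?_, ?_⟩, ?_⟩
      · rw [hX]
        exact ⟨⟨lt_of_lt_of_le ht₀ hmmem.1.1, hmmem.1.2⟩, Or.inl hmmem.2⟩
      · intro x hx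
        rw [hX] at hx
        obtain ⟨⟨hx0, hxt⟩, hxv⟩ := hx
        rcases le_or_gt x t₀ with h | h
        · exact le_trans h hmmem.1.1
        · have hd : dist x t₀ < ε := by
            rw [Real.dist_eq, abs_of_pos (by linarith)]
            linarith
          have := hεP hd
          have hxα : g x = α := by
            rcases hxv with h' | h'
            · exact h'
            · exfalso; rw [h'] at this; exact lt_irrefl _ this
          exact hmub ⟨⟨le_of_lt h, hxt⟩, hxα⟩
      · rw [hmmem.2, hm₀t₀, hc]
    · -- g t₀ = β; nearby g > α
      have hev : ∀ᶠ s in nhds t₀, α < g s := by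
        have : α < g t₀ := by rw [hc]; exact hαβ
        exact (continuousAt_const (y := α)).eventually_lt hg.continuousAt this
      rw [Metric.eventually_nhds_iff] at hev
      obtain ⟨ε, hε, hεP⟩ := hev
      refine ⟨ε / 2, by positivity, ?_⟩
      intro t ⟨ht1, ht2⟩
      obtain ⟨m, hmmem, hmub⟩ := crossing_aux g hg β t₀ t ht₀ ht1 hc
      refine ⟨m, ⟨?_, ?_⟩, ?_⟩
      · rw [hX]
        exact ⟨⟨lt_of_lt_of_le ht₀ hmmem.1.1, hmmem.1.2⟩, Or.inr hmmem.2⟩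
      · intro x hx
        rw [hX] at hx
        obtain ⟨⟨hx0, hxt⟩, hxv⟩ := hx
        rcases le_or_gt x t₀ with h | h
        · exact le_trans h hmmem.1.1
        · have hd : dist x t₀ < ε := by
            rw [Real.dist_eq, abs_of_pos (by linarith)]
            linarith
          have := hεP hd
          have hxβ : g x = β := by
            rcases hxv with h' | h'
            · exfalso; rw [h'] at this; exact lt_irrefl _ this
            · exact h'
          exact hmub ⟨⟨le_of_lt h, hxt⟩, hxβ⟩
      · rw [hmmem.2, hm₀t₀, hc]
  · -- g t₀ ≠ α and g t₀ ≠ β : X t = X t₀ nearby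
    push_neg at hgt
    obtain ⟨hα, hβ⟩ := hgt
    have hev : ∀ᶠ s in nhds t₀, g s ≠ α ∧ g s ≠ β :=
      (hg.continuousAt.eventually_ne hα).and (hg.continuousAt.eventually_ne hβ)
    rw [Metric.eventually_nhds_iff] at hev
    obtain ⟨ε, hε, hεP⟩ := hev
    refine ⟨ε / 2, by positivity, ?_⟩
    intro t ⟨ht1, ht2⟩
    have hXeq : X t = X t₀ := by
      rw [hX, hX]
      ext s
      simp only [Set.mem_setOf_eq, Set.mem_Ioc]
      constructor
      · rintro ⟨⟨hs0, hst⟩, hv⟩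
        refine ⟨⟨hs0, ?_⟩, hv⟩
        by_contra h
        push_neg at h
        have hd : dist s t₀ < ε := by
          rw [Real.dist_eq, abs_of_pos (by linarith)]
          linarith
        obtain ⟨h1, h2⟩ := hεP hd
        rcases hv with h' | h' <;> [exact h1 h'; exact h2 h']
      · rintro ⟨⟨hs0, hst⟩, hv⟩
        exact ⟨⟨hs0, le_trans hst ht1⟩, hv⟩
    exact ⟨m₀, hXeq ▸ hm₀, rfl⟩
end
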